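/- For any ideal I of a commutative Noetherian ring and any elements f₁, f₂ with f = f₁·f₂ ∈ I, the radical of I equals the intersection of the radical of I + (f₁) with the radical of the saturation ((I + (f₂)) : f₁^∞). -/
import Mathlib


/-- The saturation `(I : g^∞) = {a | ∃ m, g^m · a ∈ I}` of an ideal. -/
def Ideal.sat {R : Type*} [CommRing R] (I : Ideal R) (g : R) : Ideal R where
  carrier := {a | ∃ m : ℕ, g ^ m * a ∈ I}
  zero_mem' := ⟨0, by simp⟩
  add_mem' := by
    rintro a b ⟨m, hm⟩ ⟨l, hl⟩
    refine ⟨m + l, ?_⟩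
    rw [mul_add]
    exact I.add_mem
      (by rw [pow_add, mul_comm (g ^ m) (g ^ l), mul_assoc]; exact I.mul_mem_left _ hm)
      (by rw [pow_add, mul_assoc]; exact I.mul_mem_left _ hl)
  smul_mem' := by
    rintro c a ⟨m, hm⟩
    exact ⟨m, by rw [smul_eq_mul, mul_left_comm]; exact I.mul_mem_left _ hm⟩

/-- Splitting a radical at a factorization `f = f₁·f₂ ∈ I`:
`√I = √(I + (f₁)) ∩ √((I + (f₂)) : f₁^∞)`. -/
theorem radical_splitting {R : Type*} [CommRing R] [IsNoetherianRing R]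
    (I : Ideal R) (f₁ f₂ : R) (hf : f₁ * f₂ ∈ I) :
    I.radical =
      (I ⊔ Ideal.span {f₁}).radical ⊓
        ((I ⊔ Ideal.span {f₂}).sat f₁).radical := by
  apply le_antisymm
  · refine le_inf (Ideal.radical_mono le_sup_left) (Ideal.radical_mono ?_)
    intro a ha
    exact ⟨0, by simpa using Ideal.mem_sup_left ha⟩
  · intro x hx
    obtain ⟨h1, h2⟩ := hx
    rw [Ideal.radical_eq_sInf, Ideal.mem_sInf]
    rintro P ⟨hIP, hP⟩
    by_cases hf₁ : f₁ ∈ P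
    · have : (I ⊔ Ideal.span {f₁}).radical ≤ P :=
        hP.radical_le_iff.mpr (sup_le hIP ((Ideal.span_singleton_le_iff_mem _).mpr hf₁))

      exact this h1
    · have hf₂ : f₂ ∈ P := by
        rcases hP.mem_or_mem (hIP hf) with h | h
        · exact absurd h hf₁
        · exact h
      have hsat : (I ⊔ Ideal.span {f₂}).sat f₁ ≤ P := by
        rintro a ⟨m, hm⟩
        have hmem : f₁ ^ m * a ∈ P := by
          have : I ⊔ Ideal.span {f₂} ≤ P :=
            sup_le hIP ((Ideal.span_singleton_le_iff_mem _).mpr hf₂)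
          exact this hm
        rcases hP.mem_or_mem hmem with h | h
        · exact absurd (hP.mem_of_pow_mem m h) hf₁
        · exact h
      have : ((I ⊔ Ideal.span {f₂}).sat f₁).radical ≤ P := hP.radical_le_iff.mpr hsat
      exact this h2
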